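/- arXiv:2604.24460 — 2 statements merged into one kernel-verified Lean document; each statement's English description precedes it below -/
import Mathlib

section
/- Let ρ be a Bell-diagonal qutrit-qutrit state, i.e. ρ ∈ M_3, whose partial transpose ρ^Γ is not positive semidefinite, and let λ_min(ρ^Γ) < 0 denote the smallest eigenvalue of the Hermitian matrix ρ^Γ. Then there exists a normalized vector |φ⟩ ∈ ℂ³ ⊗ ℂ³ of Schmidt rank 2 such that ρ^Γ|φ⟩ = λ_min(ρ^Γ)|φ⟩; in particular ⟨φ|ρ^Γ|φ⟩ = λ_min(ρ^Γ) < 0. -/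
open Matrix BigOperators Complex Kronecker
open scoped ComplexOrder

/-- `ω = exp(2πi/d)`. -/
noncomputable def omg (d : ℕ) : ℂ := Complex.exp (2 * Real.pi * Complex.I / (d : ℂ))

/-- `ω^x` for `x : ZMod d`. -/
noncomputable def wpow (d : ℕ) [NeZero d] (x : ZMod d) : ℂ := omg d ^ x.val

/-- Weyl-Heisenberg operator `W_{k,l} = Σ_j ω^{jk} |j⟩⟨j+l|`. -/
noncomputable def Weyl (d : ℕ) [NeZero d] (k l : ZMod d) : Matrix (ZMod d) (ZMod d) ℂ :=
  Matrix.of fun i j => if j = i + l then wpow d (i * k) else 0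

/-- Bell basis vector `|Ω_{k,l}⟩ = (W_{k,l} ⊗ 1)|Ω_{0,0}⟩`, whose `(i,j)` entry is
`(1/√d) (W_{k,l})_{i,j}`. -/
noncomputable def OmegaVec (d : ℕ) [NeZero d] (k l : ZMod d) : ZMod d × ZMod d → ℂ :=
  fun p => ((1 / Real.sqrt d : ℝ) : ℂ) * Weyl d k l p.1 p.2

/-- Bell projector `P_{k,l} = |Ω_{k,l}⟩⟨Ω_{k,l}|`. -/
noncomputable def BellProj (d : ℕ) [NeZero d] (k l : ZMod d) :
    Matrix (ZMod d × ZMod d) (ZMod d × ZMod d) ℂ :=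
  Matrix.of fun p q => OmegaVec d k l p * (starRingEnd ℂ) (OmegaVec d k l q)

/-- Partial transpose on the second tensor factor:
`(ρ^Γ)_{(i,j),(k,l)} = ρ_{(i,l),(k,j)}`. -/
def PT {d : ℕ} (ρ : Matrix (ZMod d × ZMod d) (ZMod d × ZMod d) ℂ) :
    Matrix (ZMod d × ZMod d) (ZMod d × ZMod d) ℂ :=
  Matrix.of fun p q => ρ (p.1, q.2) (q.1, p.2)

/-- A vector in `ℂ^d ⊗ ℂ^d` has Schmidt rank 2:
`φ = μ₀ a₀ ⊗ b₀ + μ₁ a₁ ⊗ b₁` with `μ₀ ≥ μ₁ > 0` and orthonormal pairs. -/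
def SchmidtRank2 {d : ℕ} [NeZero d] (φ : ZMod d × ZMod d → ℂ) : Prop :=
  ∃ (μ₀ μ₁ : ℝ) (a b : Fin 2 → ZMod d → ℂ),
    μ₁ ≤ μ₀ ∧ 0 < μ₁ ∧
    (∀ i j, star (a i) ⬝ᵥ a j = if i = j then 1 else 0) ∧
    (∀ i j, star (b i) ⬝ᵥ b j = if i = j then 1 else 0) ∧
    φ = fun p => (μ₀ : ℂ) * a 0 p.1 * b 0 p.2 + (μ₁ : ℂ) * a 1 p.1 * b 1 p.2

lemma cover3 {q q' q'' : ZMod 3} (h1 : q ≠ q') (h2 : q ≠ q'') (h3 : q' ≠ q'') (c : ZMod 3) :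
    c = q ∨ c = q' ∨ c = q'' := by revert h1 h2 h3; revert q q' q'' c; decide

lemma sum_zmod3 {M : Type*} [AddCommMonoid M] (f : ZMod 3 → M) (q q' q'' : ZMod 3)
    (h1 : q ≠ q') (h2 : q ≠ q'') (h3 : q' ≠ q'') : ∑ c, f c = f q + f q' + f q'' := by
  have huniv : (Finset.univ : Finset (ZMod 3)) = {q, q', q''} :=
    (Finset.eq_univ_iff_forall.2 fun c => by
      simpa using cover3 h1 h2 h3 c).symm
  rw [huniv, Finset.sum_insert (by simp [h1, h2]), Finset.sum_insert (by simp [h3]),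
    Finset.sum_singleton, add_assoc]

lemma ker_lemma (M : Matrix (ZMod 3) (ZMod 3) ℂ) (r r' q q' q'' : ZMod 3)
    (h1 : q ≠ q') (h2 : q ≠ q'') (h3 : q' ≠ q'')
    (hD : M r q * M r' q' - M r q' * M r' q ≠ 0)
    (x y : ZMod 3 → ℂ) (hx : M *ᵥ x = 0) (hy : M *ᵥ y = 0)
    (hxy : star x ⬝ᵥ y = 0) (hx0 : x ≠ 0) (hy0 : y ≠ 0) : False := by
  set D := M r q * M r' q' - M r q' * M r' q with hDdef
  set A := M r q' * M r' q'' - M r q'' * M r' q' with hAdef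
  set B := M r q'' * M r' q - M r q * M r' q'' with hBdef
  have expand : ∀ z : ZMod 3 → ℂ, M *ᵥ z = 0 →
      (M r q * z q + M r q' * z q' + M r q'' * z q'' = 0) ∧
      (M r' q * z q + M r' q' * z q' + M r' q'' * z q'' = 0) := by
    intro z hz
    refine ⟨?_, ?_⟩
    · have := congrFun hz r
      simpa [Matrix.mulVec, dotProduct, sum_zmod3 (fun c => M r c * z c) q q' q'' h1 h2 h3]
        using this
    · have := congrFun hz r'
      simpa [Matrix.mulVec, dotProduct, sum_zmod3 (fun c => M r' c * z c) q q' q'' h1 h2 h3]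
        using this
  obtain ⟨ex1, ex2⟩ := expand x hx
  obtain ⟨ey1, ey2⟩ := expand y hy
  have hxq : x q = A / D * x q'' := by
    field_simp
    linear_combination (M r' q') * ex1 - (M r q') * ex2
  have hxq' : x q' = B / D * x q'' := by
    field_simp
    linear_combination (M r q) * ex2 - (M r' q) * ex1
  have hyq : y q = A / D * y q'' := by
    field_simp
    linear_combination (M r' q') * ey1 - (M r q') * ey2
  have hyq' : y q' = B / D * y q'' := by
    field_simp
    linear_combination (M r q) * ey2 - (M r' q) * ey1
  have hD' : (starRingEnd ℂ) D ≠ 0 := by simpa using hD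
  have hxyexp : (starRingEnd ℂ) (x q) * y q + (starRingEnd ℂ) (x q') * y q'
      + (starRingEnd ℂ) (x q'') * y q'' = 0 := by
    have := hxy
    simpa [dotProduct, Pi.star_apply, Complex.star_def,
      sum_zmod3 (fun c => (starRingEnd ℂ) (x c) * y c) q q' q'' h1 h2 h3] using this
  rw [hxq, hxq', hyq, hyq'] at hxyexp
  simp only [_root_.map_mul, map_div₀] at hxyexp
  have hfac : (starRingEnd ℂ) (x q'') * y q'' *
      ((starRingEnd ℂ) A * A + (starRingEnd ℂ) B * B + (starRingEnd ℂ) D * D) = 0 := by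
    field_simp at hxyexp
    linear_combination hxyexp
  have hpos : ((starRingEnd ℂ) A * A + (starRingEnd ℂ) B * B + (starRingEnd ℂ) D * D) ≠ 0 := by
    rw [← Complex.normSq_eq_conj_mul_self, ← Complex.normSq_eq_conj_mul_self,
      ← Complex.normSq_eq_conj_mul_self]
    have hgt : 0 < Complex.normSq A + Complex.normSq B + Complex.normSq D := by
      have := Complex.normSq_pos.2 hD
      have hA := Complex.normSq_nonneg A
      have hB := Complex.normSq_nonneg B
      linarith
    push_cast
    exact_mod_cast ne_of_gt (by exact_mod_cast hgt)
  have h0 : (starRingEnd ℂ) (x q'') * y q'' = 0 := by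
    rcases mul_eq_zero.mp hfac with h | h
    · exact h
    · exact absurd h hpos
  rcases mul_eq_zero.mp h0 with h | h
  · have hx'' : x q'' = 0 := by simpa using h
    apply hx0
    funext c
    rcases cover3 h1 h2 h3 c with rfl | rfl | rfl
    · simp [hxq, hx'']
    · simp [hxq', hx'']
    · simp [hx'']
  · apply hy0
    funext c
    rcases cover3 h1 h2 h3 c with rfl | rfl | rfl
    · simp [hyq, h]
    · simp [hyq', h]
    · simp [h]

lemma omg3_pow : omg 3 ^ (3 : ℕ) = 1 := by
  rw [omg, ← Complex.exp_nat_mul]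
  rw [show (3 : ℕ) * (2 * (Real.pi : ℂ) * Complex.I / ((3:ℕ) : ℂ)) =
      2 * (Real.pi : ℂ) * Complex.I by
    push_cast
    field_simp]
  exact Complex.exp_two_pi_mul_I

lemma omg3_abs : ‖omg 3‖ = 1 := by
  rw [omg, show (2 * (Real.pi : ℂ) * Complex.I / ((3:ℕ) : ℂ)) =
      ((2 * Real.pi / 3 : ℝ) : ℂ) * Complex.I by push_cast; ring]
  exact Complex.norm_exp_ofReal_mul_I _

lemma wpow_add (x y : ZMod 3) : wpow 3 (x + y) = wpow 3 x * wpow 3 y := by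
  rw [wpow, wpow, wpow, ← pow_add]
  have h : (x + y).val = (x.val + y.val) % 3 := by
    rw [ZMod.val_add]
  rw [h]
  conv_rhs => rw [show x.val + y.val = 3 * ((x.val + y.val) / 3) + (x.val + y.val) % 3 from
    (Nat.div_add_mod _ 3).symm]
  rw [pow_add, pow_mul, omg3_pow, one_pow, one_mul]

lemma wpow_conj_self (x : ZMod 3) : (starRingEnd ℂ) (wpow 3 x) * wpow 3 x = 1 := by
  rw [← Complex.normSq_eq_conj_mul_self, Complex.normSq_eq_norm_sq]
  rw [wpow, norm_pow, omg3_abs, one_pow]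
  norm_num

lemma omega_shift (k l : ZMod 3) (a b : ZMod 3 × ZMod 3) :
    OmegaVec 3 k l (a + (1, 1)) * (starRingEnd ℂ) (OmegaVec 3 k l (b + (1, 1))) =
    OmegaVec 3 k l a * (starRingEnd ℂ) (OmegaVec 3 k l b) := by
  simp only [OmegaVec, Weyl, Matrix.of_apply, Prod.fst_add, Prod.snd_add]
  have hca : (a.2 + 1 = a.1 + 1 + l) ↔ (a.2 = a.1 + l) := by
    rw [add_right_comm]
    exact add_left_inj 1
  have hcb : (b.2 + 1 = b.1 + 1 + l) ↔ (b.2 = b.1 + l) := by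
    rw [add_right_comm]
    exact add_left_inj 1
  by_cases ha : a.2 = a.1 + l <;> by_cases hb : b.2 = b.1 + l <;>
    simp only [hca, hcb, ha, hb, show ∀ t : ZMod 3, t + l + 1 = t + 1 + l from fun t => by ring,
      eq_self_iff_true, if_true, if_false, reduceIte, mul_zero, zero_mul, map_zero,
      _root_.map_mul, mul_one, one_mul]
  rw [show (a.1 + 1) * k = a.1 * k + k by ring, show (b.1 + 1) * k = b.1 * k + k by ring,
    wpow_add, wpow_add]
  try simp only [_root_.map_mul]
  have hk := wpow_conj_self k
  linear_combination (((1 / Real.sqrt 3 : ℝ) : ℂ) * wpow 3 (a.1 * k) *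
    (starRingEnd ℂ) (((1 / Real.sqrt 3 : ℝ) : ℂ)) * (starRingEnd ℂ) (wpow 3 (b.1 * k))) * hk

lemma dot_smul_smul (c₁ c₂ : ℂ) (u v : ZMod 3 → ℂ) :
    star (fun p => c₁ * u p) ⬝ᵥ (fun p => c₂ * v p) =
      (starRingEnd ℂ) c₁ * c₂ * (star u ⬝ᵥ v) := by
  simp only [dotProduct, Pi.star_apply, Complex.star_def, _root_.map_mul, Finset.mul_sum]
  exact Finset.sum_congr rfl fun _ _ => by ring

lemma schmidt_lemma (φ : ZMod 3 × ZMod 3 → ℂ) (M : Matrix (ZMod 3) (ZMod 3) ℂ)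
    (hM : ∀ i j, M i j = φ (i, j)) (hdet : M.det = 0)
    (r r' q q' : ZMod 3) (hq : q ≠ q')
    (hD : M r q * M r' q' - M r q' * M r' q ≠ 0) :
    SchmidtRank2 φ := by
  have hthird : ∀ u u' : ZMod 3, u ≠ u' → u ≠ -(u + u') ∧ u' ≠ -(u + u') := by decide
  obtain ⟨h2, h3⟩ := hthird q q' hq
  have hPSD : (Mᴴ * M).PosSemidef := Matrix.posSemidef_conjTranspose_mul_self M
  have hHer : (Mᴴ * M).IsHermitian := hPSD.1
  obtain ⟨V, hV⟩ : ∃ V : ZMod 3 → ZMod 3 → ℂ,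
      V = fun i => ⇑(hHer.eigenvectorBasis i) := ⟨_, rfl⟩
  have hmv : ∀ i, (Mᴴ * M) *ᵥ V i = hHer.eigenvalues i • V i := by
    intro i; rw [hV]; exact hHer.mulVec_eigenvectorBasis i
  have horth : ∀ i j, star (V i) ⬝ᵥ V j = if i = j then 1 else 0 := by
    intro i j
    rw [hV]
    have h := orthonormal_iff_ite.mp hHer.eigenvectorBasis.orthonormal i j
    rw [← h, EuclideanSpace.inner_eq_star_dotProduct]
    exact dotProduct_comm _ _
  have hnz : ∀ i, V i ≠ 0 := by
    intro i h
    have h1 := horth i i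
    rw [h] at h1
    simp at h1
  have hcomp : ∀ cc p2 : ZMod 3, ∑ i, V i cc * (starRingEnd ℂ) (V i p2) =
      if cc = p2 then 1 else 0 := by
    intro cc p2
    have hU := (Matrix.mem_unitaryGroup_iff).mp (hHer.eigenvectorUnitary).2
    have h1 := congrFun (congrFun hU cc) p2
    simp only [Matrix.mul_apply, Matrix.star_eq_conjTranspose, Matrix.conjTranspose_apply,
      Matrix.one_apply, Matrix.IsHermitian.eigenvectorUnitary_apply] at h1
    rw [hV]
    exact h1
  have hker : ∀ z : ZMod 3 → ℂ, (Mᴴ * M) *ᵥ z = 0 → M *ᵥ z = 0 := by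
    intro z hz
    have h1 : star (M *ᵥ z) ⬝ᵥ (M *ᵥ z) = 0 := by
      rw [star_mulVec, ← dotProduct_mulVec, mulVec_mulVec, hz]
      simp
    exact dotProduct_star_self_eq_zero.mp h1
  have hdetH : (Mᴴ * M).det = 0 := by rw [det_mul, hdet, mul_zero]
  have h0 := hHer.det_eq_prod_eigenvalues
  rw [hdetH] at h0
  obtain ⟨i₂, -, hi₂⟩ := Finset.prod_eq_zero_iff.mp h0.symm
  have hi₂0 : hHer.eigenvalues i₂ = 0 := RCLike.ofReal_eq_zero.mp hi₂
  have hMv₂ : M *ᵥ V i₂ = 0 := by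
    apply hker
    rw [hmv, hi₂0, zero_smul]
  have hposev : ∀ i, i ≠ i₂ → 0 < hHer.eigenvalues i := by
    intro i hi
    rcases lt_or_eq_of_le (hPSD.eigenvalues_nonneg i) with h | h
    · exact h
    · exfalso
      have hMvi : M *ᵥ V i = 0 := by
        apply hker
        rw [hmv, ← h, zero_smul]
      refine ker_lemma M r r' q q' (-(q + q')) hq h2 h3 hD _ _ hMvi hMv₂ ?_ (hnz i) (hnz i₂)
      rw [horth]
      simp [hi]
  have hne1 : ∀ t : ZMod 3, t + 1 ≠ t ∧ t + 2 ≠ t ∧ t + 1 ≠ t + 2 := by decide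
  obtain ⟨j₀, j₁, hj01, hj0, hj1, hjorder⟩ :
      ∃ j₀ j₁ : ZMod 3, j₀ ≠ j₁ ∧ j₀ ≠ i₂ ∧ j₁ ≠ i₂ ∧
        hHer.eigenvalues j₁ ≤ hHer.eigenvalues j₀ := by
    obtain ⟨e1, e2, e3⟩ := hne1 i₂
    rcases le_total (hHer.eigenvalues (i₂ + 1)) (hHer.eigenvalues (i₂ + 2)) with h | h
    · exact ⟨i₂ + 2, i₂ + 1, e3.symm, e2, e1, h⟩
    · exact ⟨i₂ + 1, i₂ + 2, e3, e1, e2, h⟩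
  set μ₀ := Real.sqrt (hHer.eigenvalues j₀) with hμ₀
  set μ₁ := Real.sqrt (hHer.eigenvalues j₁) with hμ₁
  have hμ₀pos : 0 < μ₀ := Real.sqrt_pos.2 (hposev j₀ hj0)
  have hμ₁pos : 0 < μ₁ := Real.sqrt_pos.2 (hposev j₁ hj1)
  have hμ₀sq : μ₀ ^ 2 = hHer.eigenvalues j₀ := Real.sq_sqrt (le_of_lt (hposev j₀ hj0))
  have hμ₁sq : μ₁ ^ 2 = hHer.eigenvalues j₁ := Real.sq_sqrt (le_of_lt (hposev j₁ hj1))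
  have hμ₀ne : (μ₀ : ℂ) ≠ 0 := by exact_mod_cast ne_of_gt hμ₀pos
  have hμ₁ne : (μ₁ : ℂ) ≠ 0 := by exact_mod_cast ne_of_gt hμ₁pos
  have hMdot : ∀ i j : ZMod 3, star (M *ᵥ V i) ⬝ᵥ (M *ᵥ V j) =
      if i = j then ((hHer.eigenvalues j : ℝ) : ℂ) else 0 := by
    intro i j
    rw [star_mulVec, ← dotProduct_mulVec, mulVec_mulVec, hmv j]
    rcases eq_or_ne i j with rfl | h
    · rw [dotProduct_smul, horth]
      simp [Complex.real_smul]
    · rw [dotProduct_smul, horth]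
      simp [h]
  refine ⟨μ₀, μ₁,
    ![fun p => (μ₀ : ℂ)⁻¹ * (M *ᵥ V j₀) p, fun p => (μ₁ : ℂ)⁻¹ * (M *ᵥ V j₁) p],
    ![fun c => (starRingEnd ℂ) (V j₀ c), fun c => (starRingEnd ℂ) (V j₁ c)],
    Real.sqrt_le_sqrt hjorder, hμ₁pos, ?_, ?_, ?_⟩
  · intro i j
    fin_cases i <;> fin_cases j <;>
        simp only [Matrix.cons_val_zero, Matrix.cons_val_one, Matrix.head_cons, Fin.zero_eta,
          Fin.mk_one] <;>
        rw [dot_smul_smul, hMdot] <;>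
        simp only [if_true, if_false, hj01, hj01.symm, reduceIte]
    · rw [show ((hHer.eigenvalues j₀ : ℝ) : ℂ) = (μ₀ : ℂ) * μ₀ by
        rw [← hμ₀sq]; push_cast; ring]
      field_simp
      rw [map_div₀, map_one, Complex.conj_ofReal, mul_one_div_cancel hμ₀ne]
    · simp
    · simp
    · rw [show ((hHer.eigenvalues j₁ : ℝ) : ℂ) = (μ₁ : ℂ) * μ₁ by
        rw [← hμ₁sq]; push_cast; ring]
      field_simp
      rw [map_div₀, map_one, Complex.conj_ofReal, mul_one_div_cancel hμ₁ne]
  · intro i j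
    have key : ∀ i' j' : ZMod 3,
        star (fun c => (starRingEnd ℂ) (V i' c)) ⬝ᵥ (fun c => (starRingEnd ℂ) (V j' c)) =
        (starRingEnd ℂ) (star (V i') ⬝ᵥ V j') := by
      intro i' j'
      simp only [dotProduct, Pi.star_apply, Complex.star_def, map_sum, _root_.map_mul,
        Complex.conj_conj]
      try exact Finset.sum_congr rfl fun c _ => by ring
    fin_cases i <;> fin_cases j <;>
        simp only [Matrix.cons_val_zero, Matrix.cons_val_one, Matrix.head_cons, Fin.zero_eta,
          Fin.mk_one] <;>
        rw [key, horth] <;>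
        simp [hj01, hj01.symm]
  · funext p
    have e1 : ∀ i, (M *ᵥ V i) p.1 * (starRingEnd ℂ) (V i p.2) =
        ∑ cc, M p.1 cc * (V i cc * (starRingEnd ℂ) (V i p.2)) := by
      intro i
      simp only [Matrix.mulVec, dotProduct, Finset.sum_mul, mul_assoc]
    have hexpand : ∑ i, (M *ᵥ V i) p.1 * (starRingEnd ℂ) (V i p.2) = M p.1 p.2 := by
      rw [Finset.sum_congr rfl fun i _ => e1 i, Finset.sum_comm]
      have e2 : ∀ cc, ∑ i, M p.1 cc * (V i cc * (starRingEnd ℂ) (V i p.2)) =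
          M p.1 cc * (if cc = p.2 then 1 else 0) := by
        intro cc
        rw [← Finset.mul_sum, hcomp]
      rw [Finset.sum_congr rfl fun cc _ => e2 cc]
      simp [mul_ite]
    rw [← hM, ← hexpand]
    obtain ⟨e1', e2', e3'⟩ := hne1 i₂
    rw [sum_zmod3 (fun i => (M *ᵥ V i) p.1 * (starRingEnd ℂ) (V i p.2)) i₂ j₀ j₁
      (Ne.symm hj0) (Ne.symm hj1) hj01, hMv₂]
    simp only [Pi.zero_apply, zero_mul, zero_add, Matrix.cons_val_zero, Matrix.cons_val_one,
      Matrix.head_cons]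
    field_simp

/-- For every Bell-diagonal qutrit state `ρ ∈ M₃` whose partial transpose is not
positive semidefinite, the smallest eigenvalue `λ_min(ρ^Γ)` is negative and there is a
normalized Schmidt-rank-2 eigenvector of `ρ^Γ` for the eigenvalue `λ_min(ρ^Γ)`;
in particular `⟨φ|ρ^Γ|φ⟩ = λ_min(ρ^Γ) < 0`. -/
theorem stmt0 (ρ : Matrix (ZMod 3 × ZMod 3) (ZMod 3 × ZMod 3) ℂ)
    (c : ZMod 3 → ZMod 3 → ℝ) (hc : ∀ k l, 0 ≤ c k l)
    (hsum : ∑ k : ZMod 3, ∑ l : ZMod 3, c k l = 1)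
    (hρ : ρ = ∑ k : ZMod 3, ∑ l : ZMod 3, (c k l : ℂ) • BellProj 3 k l)
    (hH : (PT ρ).IsHermitian)
    (hNPT : ¬ (PT ρ).PosSemidef) :
    (⨅ i, hH.eigenvalues i) < 0 ∧
    ∃ φ : ZMod 3 × ZMod 3 → ℂ,
      star φ ⬝ᵥ φ = 1 ∧ SchmidtRank2 φ ∧
      PT ρ *ᵥ φ = ((⨅ i, hH.eigenvalues i : ℝ) : ℂ) • φ ∧
      star φ ⬝ᵥ (PT ρ *ᵥ φ) = ((⨅ i, hH.eigenvalues i : ℝ) : ℂ) := by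
  classical
  -- decidable facts about ZMod 3
  have hz1 : ∀ t : ZMod 3, t ≠ t + 1 := by decide
  have hz2 : ∀ t : ZMod 3, t + 1 ≠ t := by decide
  have hz3 : ∀ t : ZMod 3, t + 2 ≠ t := by decide
  have hz4 : ∀ t : ZMod 3, t ≠ t + 2 := by decide
  have hz5 : ∀ t : ZMod 3, t + 1 ≠ t + 2 := by decide
  have hz6 : ∀ t : ZMod 3, t + 2 ≠ t + 1 := by decide
  have hchar : (3 : ZMod 3) = 0 := by decide
  -- entries of ρ
  have hρe : ∀ a b, ρ a b = ∑ k, ∑ l, (c k l : ℂ) *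
      (OmegaVec 3 k l a * (starRingEnd ℂ) (OmegaVec 3 k l b)) := by
    intro a b
    rw [hρ]
    simp [Matrix.sum_apply, BellProj]
  have ePT : ∀ p q : ZMod 3 × ZMod 3, PT ρ p q = ρ (p.1, q.2) (q.1, p.2) := fun p q => rfl
  -- block structure
  have hblock : ∀ p q : ZMod 3 × ZMod 3, p.1 + p.2 ≠ q.1 + q.2 → PT ρ p q = 0 := by
    intro p q hne
    rw [ePT, hρe]
    apply Finset.sum_eq_zero; intro k _
    apply Finset.sum_eq_zero; intro l _
    simp only [OmegaVec, Weyl, Matrix.of_apply]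
    by_cases h1 : q.2 = p.1 + l
    · by_cases h2 : p.2 = q.1 + l
      · exact absurd (by rw [h2, h1]; ring) hne
      · simp [h2]
    · simp [h1]
  -- shift invariance
  have hshift : ∀ p q, PT ρ (p + (1, 1)) (q + (1, 1)) = PT ρ p q := by
    intro p q
    rw [ePT, ePT, hρe, hρe]
    refine Finset.sum_congr rfl fun k _ => Finset.sum_congr rfl fun l _ => ?_
    have := omega_shift k l (p.1, q.2) (q.1, p.2)
    simp only [Prod.mk_add_mk, Prod.fst_add, Prod.snd_add] at this ⊢
    rw [this]
  have hshift' : ∀ p q, PT ρ p (q - (1, 1)) = PT ρ (p + (1, 1)) q := by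
    intro p q
    have h1 := hshift p (q - (1, 1))
    rw [show q - (1,1) + (1,1) = q by abel] at h1
    exact h1.symm
  -- diagonal entries nonnegative
  have hdiag : ∀ p, 0 ≤ (PT ρ p p).re := by
    intro p
    rw [ePT, hρe, Complex.re_sum]
    apply Finset.sum_nonneg; intro k _
    rw [Complex.re_sum]
    apply Finset.sum_nonneg; intro l _
    rw [Complex.mul_conj, ← Complex.ofReal_mul, Complex.ofReal_re]
    exact mul_nonneg (hc k l) (Complex.normSq_nonneg _)
  -- minimum eigenvalue
  have hbdd : BddBelow (Set.range hH.eigenvalues) := (Set.finite_range _).bddBelow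
  have hlam_le : ∀ i, (⨅ i, hH.eigenvalues i) ≤ hH.eigenvalues i := fun i => ciInf_le hbdd i
  have hlamneg : (⨅ i, hH.eigenvalues i) < 0 := by
    by_contra hcon
    push_neg at hcon
    apply hNPT
    apply hH.posSemidef_iff_eigenvalues_nonneg.mpr
    intro i
    by_contra hi
    push_neg at hi
    exact absurd (le_trans hcon (hlam_le i)) (not_le.2 hi)
  set lam : ℝ := ⨅ i, hH.eigenvalues i with hlam
  -- eigenvector for lam
  obtain ⟨i₀, hi₀⟩ := Finite.exists_min hH.eigenvalues
  have hlam_eq : lam = hH.eigenvalues i₀ := le_antisymm (hlam_le i₀) (le_ciInf hi₀)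
  obtain ⟨u, hu_eigen, hu_norm⟩ : ∃ u : ZMod 3 × ZMod 3 → ℂ,
      PT ρ *ᵥ u = (lam : ℂ) • u ∧ star u ⬝ᵥ u = 1 := by
    refine ⟨⇑(hH.eigenvectorBasis i₀), ?_, ?_⟩
    · rw [hH.mulVec_eigenvectorBasis i₀]
      funext p
      simp only [Pi.smul_apply, smul_eq_mul, Complex.real_smul, hlam_eq]
    · have h := orthonormal_iff_ite.mp hH.eigenvectorBasis.orthonormal i₀ i₀
      rw [EuclideanSpace.inner_eq_star_dotProduct, dotProduct_comm] at h
      simpa using h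
  have hu0 : u ≠ 0 := by
    intro h
    rw [h] at hu_norm
    simp at hu_norm
  obtain ⟨p₀, hp₀⟩ : ∃ p, u p ≠ 0 := by
    by_contra h
    push_neg at h
    exact hu0 (funext fun p => h p)
  set s : ZMod 3 := p₀.1 + p₀.2 with hs
  set v : ZMod 3 → ℂ := fun i => u (i, s - i) with hv
  set us : ZMod 3 × ZMod 3 → ℂ := fun p => if p.1 + p.2 = s then v p.1 else 0 with hus
  have husu : ∀ p : ZMod 3 × ZMod 3, p.1 + p.2 = s → us p = u p := by
    intro p hp
    have h2 : s - p.1 = p.2 := by rw [← hp]; ring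
    simp only [hus, hp, if_true, hv, h2, reduceIte]
  have hvp₀ : v p₀.1 ≠ 0 := by
    have h2 : s - p₀.1 = p₀.2 := by rw [hs]; ring
    simpa only [hv, h2] using hp₀
  -- us is an eigenvector
  have hus_eigen : PT ρ *ᵥ us = (lam : ℂ) • us := by
    funext p
    by_cases hp : p.1 + p.2 = s
    · have he : ∀ q : ZMod 3 × ZMod 3, PT ρ p q * us q = PT ρ p q * u q := by
        intro q
        by_cases hqq : q.1 + q.2 = s
        · rw [husu q hqq]
        · rw [hblock p q (by rw [hp]; exact fun h => hqq h.symm), zero_mul, zero_mul]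
      have : (PT ρ *ᵥ us) p = (PT ρ *ᵥ u) p := by
        simp only [Matrix.mulVec, dotProduct]
        exact Finset.sum_congr rfl fun q _ => he q
      rw [this, hu_eigen]
      simp only [Pi.smul_apply, smul_eq_mul, husu p hp]
    · have : (PT ρ *ᵥ us) p = 0 := by
        simp only [Matrix.mulVec, dotProduct]
        apply Finset.sum_eq_zero; intro q _
        by_cases hqq : q.1 + q.2 = s
        · rw [hblock p q (by rw [hqq]; exact hp), zero_mul]
        · simp only [hus, hqq, if_false, mul_zero, reduceIte]
      rw [this]
      simp only [Pi.smul_apply, hus, hp, if_false, smul_eq_mul, mul_zero, reduceIte]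
  -- at least two nonzero entries of v
  have htwo : ∃ b : ZMod 3, b ≠ p₀.1 ∧ v b ≠ 0 := by
    by_contra hcon
    push_neg at hcon
    set pp : ZMod 3 × ZMod 3 := (p₀.1, s - p₀.1) with hpp
    have hppblock : pp.1 + pp.2 = s := by simp only [hpp]; ring
    have husp : us pp = v p₀.1 := by simp only [hus, hpp, hppblock]; simp
    have hsum1 : (PT ρ *ᵥ us) pp = PT ρ pp pp * us pp := by
      simp only [Matrix.mulVec, dotProduct]
      apply Finset.sum_eq_single pp
      · intro q _ hqne
        by_cases hqq : q.1 + q.2 = s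
        · have : us q = 0 := by
            by_cases hq1 : q.1 = p₀.1
            · exfalso
              apply hqne
              have : q.2 = s - q.1 := by rw [← hqq]; ring
              rw [hpp, ← hq1, ← this]
            · simp only [hus, hqq, if_true, reduceIte]
              exact hcon q.1 hq1
          rw [this, mul_zero]
        · simp only [hus, hqq, if_false, mul_zero, reduceIte]
      · intro h
        exact absurd (Finset.mem_univ pp) h
    have heig := congrFun hus_eigen pp
    rw [hsum1] at heig
    simp only [Pi.smul_apply, smul_eq_mul, husp] at heig
    have hlc : (lam : ℂ) = PT ρ pp pp := by
      rcases mul_eq_mul_right_iff.mp heig with h | h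
      · exact h.symm
      · exact absurd h hvp₀
    have : (0:ℝ) ≤ lam := by
      have := hdiag pp
      rw [← hlc] at this
      simpa using this
    exact absurd this (not_le.2 hlamneg)
  obtain ⟨b₀, hb₀ne, hb₀⟩ := htwo
  -- get adjacent pair both nonzero
  obtain ⟨aa, hva, hva1⟩ : ∃ a : ZMod 3, v a ≠ 0 ∧ v (a + 1) ≠ 0 := by
    have hfact : ∀ x y : ZMod 3, y ≠ x → (y = x + 1 ∨ x = y + 1) := by decide
    rcases hfact p₀.1 b₀ hb₀ne with h | h
    · exact ⟨p₀.1, hvp₀, h ▸ hb₀⟩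
    · exact ⟨b₀, hb₀, h ▸ hvp₀⟩
  -- the combined eigenvector
  set ψ : ZMod 3 × ZMod 3 → ℂ := fun p => us p - us (p + (1, 1)) with hψ
  have hψ_eigen : PT ρ *ᵥ ψ = (lam : ℂ) • ψ := by
    have hTcomm : ∀ p, ∑ q, PT ρ p q * us (q + (1, 1)) = (PT ρ *ᵥ us) (p + (1, 1)) := by
      intro p
      rw [show (PT ρ *ᵥ us) (p + (1,1)) = ∑ q, PT ρ (p + (1,1)) q * us q from rfl]
      rw [Fintype.sum_equiv (Equiv.addRight ((1,1) : ZMod 3 × ZMod 3))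
        (fun q => PT ρ p q * us (q + (1,1))) (fun q => PT ρ (p + (1,1)) q * us q)
        (fun q => by simp only [Equiv.coe_addRight]; rw [hshift p q])]
    funext p
    have hexp : (PT ρ *ᵥ ψ) p = ∑ q, PT ρ p q * us q - ∑ q, PT ρ p q * us (q + (1, 1)) := by
      simp only [Matrix.mulVec, dotProduct, hψ, mul_sub]
      exact Finset.sum_sub_distrib _ _
    rw [hexp, hTcomm]
    have h1 : ∑ q, PT ρ p q * us q = (PT ρ *ᵥ us) p := rfl
    rw [h1, hus_eigen]
    simp only [Pi.smul_apply, smul_eq_mul, hψ]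
    ring
  -- entries of ψ
  have hψe : ∀ i j : ZMod 3, ψ (i, j) =
      (if i + j = s then v i else 0) - (if i + j = s + 1 then v (i + 1) else 0) := by
    intro i j
    simp only [hψ, hus, Prod.mk_add_mk]
    congr 1
    have hiff : (i + 1 + (j + 1) = s) ↔ (i + j = s + 1) := by
      constructor
      · intro h
        linear_combination h - hchar
      · intro h
        linear_combination h + hchar
    by_cases h : i + j = s + 1
    · rw [if_pos (hiff.2 h), if_pos h]
    · rw [if_neg (fun hh => h (hiff.1 hh)), if_neg h]
  -- kernel vector
  set w : ZMod 3 → ℂ := fun cc => v (s - cc + 1) with hw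
  set M₀ : Matrix (ZMod 3) (ZMod 3) ℂ := Matrix.of fun i j => ψ (i, j) with hM₀
  have hM₀w : M₀ *ᵥ w = 0 := by
    funext i
    show ∑ cc, M₀ i cc * w cc = 0
    rw [sum_zmod3 (fun cc => M₀ i cc * w cc) (s - i) (s - i + 1) (s - i + 2)
      (hz1 _) (hz4 _) (hz5 _)]
    have e1 : M₀ i (s - i) = v i := by
      show ψ (i, s - i) = v i
      rw [hψe]
      rw [if_pos (by ring), if_neg (by rw [show i + (s - i) = s by ring]; exact hz1 s)]
      ring
    have e2 : M₀ i (s - i + 1) = -v (i + 1) := by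
      show ψ (i, s - i + 1) = -v (i + 1)
      rw [hψe]
      rw [if_neg (by rw [show i + (s - i + 1) = s + 1 by ring]; exact hz2 s),
        if_pos (by ring)]
      ring
    have e3 : M₀ i (s - i + 2) = 0 := by
      show ψ (i, s - i + 2) = 0
      rw [hψe]
      rw [if_neg (by rw [show i + (s - i + 2) = s + 2 by ring]; exact hz3 s),
        if_neg (by rw [show i + (s - i + 2) = s + 2 by ring]; exact hz6 s)]
      ring
    have f1 : w (s - i) = v (i + 1) := by
      simp only [hw]
      rw [show s - (s - i) + 1 = i + 1 by ring]
    have f2 : w (s - i + 1) = v i := by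
      simp only [hw]
      rw [show s - (s - i + 1) + 1 = i by ring]
    rw [e1, e2, e3, f1, f2]
    ring
  have hw0 : w ≠ 0 := by
    intro h
    have h1 := congrFun h (s - aa)
    simp only [hw, Pi.zero_apply] at h1
    rw [show s - (s - aa) + 1 = aa + 1 by ring] at h1
    exact hva1 h1
  -- normalization
  set NR : ℝ := ∑ p : ZMod 3 × ZMod 3, Complex.normSq (ψ p) with hNR
  have hψaa : ψ (aa, s - aa) = v aa := by
    rw [hψe]
    rw [if_pos (by ring), if_neg (by rw [show aa + (s - aa) = s by ring]; exact hz1 s)]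
    ring
  have hNRpos : 0 < NR := by
    rw [hNR]
    apply Finset.sum_pos'
    · intro p _
      exact Complex.normSq_nonneg _
    · exact ⟨(aa, s - aa), Finset.mem_univ _, by rw [hψaa]; exact Complex.normSq_pos.2 hva⟩
  set t : ℝ := (Real.sqrt NR)⁻¹ with ht
  have htpos : 0 < t := inv_pos.2 (Real.sqrt_pos.2 hNRpos)
  have htne : (t : ℂ) ≠ 0 := by exact_mod_cast ne_of_gt htpos
  set φ : ZMod 3 × ZMod 3 → ℂ := fun p => (t : ℂ) * ψ p with hφ
  have hφsmul : φ = (t : ℂ) • ψ := rfl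
  have hφnorm : star φ ⬝ᵥ φ = 1 := by
    have hterm : ∀ p, (star φ) p * φ p = ((t ^ 2 * Complex.normSq (ψ p) : ℝ) : ℂ) := by
      intro p
      simp only [Pi.star_apply, hφ, Complex.star_def, _root_.map_mul, Complex.conj_ofReal]
      rw [show ((t:ℂ)) * (starRingEnd ℂ) (ψ p) * ((t:ℂ) * ψ p) =
        ((t:ℂ) * (t:ℂ)) * ((starRingEnd ℂ) (ψ p) * ψ p) by ring]
      rw [← Complex.normSq_eq_conj_mul_self]
      push_cast
      ring
    rw [show star φ ⬝ᵥ φ = ∑ p, (star φ) p * φ p from rfl]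
    rw [Finset.sum_congr rfl fun p _ => hterm p, ← Complex.ofReal_sum]
    rw [← Finset.mul_sum, ← hNR]
    rw [show t ^ 2 * NR = 1 by
      rw [ht, inv_pow, Real.sq_sqrt (le_of_lt hNRpos)]
      field_simp]
    norm_num
  have hφ_eigen : PT ρ *ᵥ φ = (lam : ℂ) • φ := by
    rw [hφsmul, Matrix.mulVec_smul, hψ_eigen, smul_comm]
  -- Schmidt rank 2
  set MM : Matrix (ZMod 3) (ZMod 3) ℂ := Matrix.of fun i j => φ (i, j) with hMM
  have hMMe : ∀ i j, MM i j = (t : ℂ) * ψ (i, j) := fun i j => rfl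
  have hMMw : MM *ᵥ w = 0 := by
    funext i
    show ∑ cc, MM i cc * w cc = 0
    have : ∀ cc, MM i cc * w cc = (t : ℂ) * (M₀ i cc * w cc) := by
      intro cc
      rw [hMMe]
      show (t:ℂ) * ψ (i, cc) * w cc = (t:ℂ) * (ψ (i, cc) * w cc)
      ring
    rw [Finset.sum_congr rfl fun cc _ => this cc, ← Finset.mul_sum]
    have := congrFun hM₀w i
    rw [show (M₀ *ᵥ w) i = ∑ cc, M₀ i cc * w cc from rfl] at this
    rw [this]
    simp
  have hMMdet : MM.det = 0 := Matrix.exists_mulVec_eq_zero_iff.mp ⟨w, hw0, hMMw⟩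
  -- entry values for the minor
  have ent1 : MM aa (s - aa) = (t : ℂ) * v aa := by
    rw [hMMe, hψaa]
  have ent2 : MM aa (s + 1 - aa) = -(t : ℂ) * v (aa + 1) := by
    rw [hMMe, hψe]
    rw [if_neg (by rw [show aa + (s + 1 - aa) = s + 1 by ring]; exact hz2 s),
      if_pos (by ring)]
    ring
  have ent3 : MM (aa + 1) (s - aa) = -(t : ℂ) * v (aa + 2) := by
    rw [hMMe, hψe]
    rw [if_neg (by rw [show aa + 1 + (s - aa) = s + 1 by ring]; exact hz2 s),
      if_pos (by ring)]
    rw [show aa + 1 + 1 = aa + 2 by ring]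
    ring
  have ent4 : MM (aa + 1) (s + 1 - aa) = 0 := by
    rw [hMMe, hψe]
    rw [if_neg (by rw [show aa + 1 + (s + 1 - aa) = s + 2 by ring]; exact hz3 s),
      if_neg (by rw [show aa + 1 + (s + 1 - aa) = s + 2 by ring]; exact hz6 s)]
    ring
  have ent5 : MM (aa + 1) (s + 2 - aa) = (t : ℂ) * v (aa + 1) := by
    rw [hMMe, hψe]
    rw [if_pos (by linear_combination hchar),
      if_neg (by rw [show aa + 1 + (s + 2 - aa) = s + 3 by ring, show s + 3 = s by
        linear_combination hchar]; exact hz1 s)]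
    ring
  have ent6 : MM aa (s + 2 - aa) = 0 := by
    rw [hMMe, hψe]
    rw [if_neg (by rw [show aa + (s + 2 - aa) = s + 2 by ring]; exact hz3 s),
      if_neg (by rw [show aa + (s + 2 - aa) = s + 2 by ring]; exact hz6 s)]
    ring
  have hqne1 : s - aa ≠ s + 1 - aa := by
    intro h
    have : s = s + 1 := by linear_combination h
    exact hz1 s this
  have hqne2 : s - aa ≠ s + 2 - aa := by
    intro h
    have : s = s + 2 := by linear_combination h
    exact hz4 s this
  have hschmidt : SchmidtRank2 φ := by
    by_cases hvz : v (aa + 2) = 0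
    · refine schmidt_lemma φ MM (fun i j => rfl) hMMdet aa (aa + 1) (s - aa) (s + 2 - aa)
        hqne2 ?_
      rw [ent1, ent5, ent6, ent3, hvz]
      simp only [mul_zero, zero_mul, sub_zero, neg_mul, mul_neg, neg_zero]
      intro h
      rcases mul_eq_zero.mp h with h1 | h1
      · rcases mul_eq_zero.mp h1 with h2 | h2
        · exact htne h2
        · exact hva h2
      · rcases mul_eq_zero.mp h1 with h2 | h2
        · exact htne h2
        · exact hva1 h2
    · refine schmidt_lemma φ MM (fun i j => rfl) hMMdet aa (aa + 1) (s - aa) (s + 1 - aa)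
        hqne1 ?_
      rw [ent1, ent2, ent3, ent4]
      simp only [mul_zero, zero_mul, neg_mul, mul_neg, neg_neg, zero_sub]
      intro h
      have h2 : ((t:ℂ) * v (aa + 1)) * ((t:ℂ) * v (aa + 2)) = 0 := by
        have := neg_eq_zero.mp h
        linear_combination this
      rcases mul_eq_zero.mp h2 with h1 | h1
      · rcases mul_eq_zero.mp h1 with h3 | h3
        · exact htne h3
        · exact hva1 h3
      · rcases mul_eq_zero.mp h1 with h3 | h3
        · exact htne h3
        · exact hvz h3
  refine ⟨hlamneg, φ, hφnorm, hschmidt, hφ_eigen, ?_⟩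
  rw [hφ_eigen, dotProduct_smul, hφnorm]
  simp
end

section
/- Let |φ⟩ = μ_0 |a_0⟩⊗|b_0⟩ + μ_1 |a_1⟩⊗|b_1⟩ be a normalized Schmidt rank 2 vector in ℂ^d ⊗ ℂ^d (μ_0 ≥ μ_1 > 0, μ_0² + μ_1² = 1, ⟨a_i|a_j⟩ = ⟨b_i|b_j⟩ = δ_{ij}) and W_φ = (|φ⟩⟨φ|)^Γ. Then the mirrored operator M_φ = μ_0² · 1_{d²} − W_φ is positive semidefinite. -/
open Matrix BigOperators Complex Kronecker
open scoped ComplexOrder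

/-- The rank-one operator `|φ⟩⟨φ|`. -/
def outer {d : ℕ} (φ : ZMod d × ZMod d → ℂ) :
    Matrix (ZMod d × ZMod d) (ZMod d × ZMod d) ℂ :=
  Matrix.of fun p q => φ p * (starRingEnd ℂ) (φ q)

/-- The mirrored operator `M_φ = μ₀² 1 - W_φ` of the 1-distillability witness of a
normalized Schmidt-rank-2 vector is positive semidefinite. -/
theorem stmt8 (d : ℕ) [NeZero d] (μ₀ μ₁ : ℝ)
    (a b : Fin 2 → ZMod d → ℂ)
    (hμ : μ₁ ≤ μ₀) (hμ1 : 0 < μ₁) (hnorm : μ₀ ^ 2 + μ₁ ^ 2 = 1)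
    (ha : ∀ i j, star (a i) ⬝ᵥ a j = if i = j then 1 else 0)
    (hb : ∀ i j, star (b i) ⬝ᵥ b j = if i = j then 1 else 0)
    (φ : ZMod d × ZMod d → ℂ)
    (hφ : φ = fun p => (μ₀ : ℂ) * a 0 p.1 * b 0 p.2 + (μ₁ : ℂ) * a 1 p.1 * b 1 p.2) :
    (((μ₀ ^ 2 : ℝ) : ℂ) • (1 : Matrix (ZMod d × ZMod d) (ZMod d × ZMod d) ℂ) -
      PT (outer φ)).PosSemidef := by
  classical
  set f : Fin 2 → Fin 2 → (ZMod d × ZMod d → ℂ) :=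
    fun s t p => a s p.1 * star (b t p.2) with hf
  -- orthonormality of the family `f`
  have hfon : ∀ s t s' t' : Fin 2, star (f s t) ⬝ᵥ f s' t'
      = (if s = s' then 1 else 0) * (if t' = t then 1 else 0) := by
    intro s t s' t'
    have key : star (f s t) ⬝ᵥ f s' t'
        = (star (a s) ⬝ᵥ a s') * (star (b t') ⬝ᵥ b t) := by
      rw [dotProduct, dotProduct, dotProduct, Fintype.sum_mul_sum, hf]
      rw [Fintype.sum_prod_type]
      refine Finset.sum_congr rfl fun i _ => Finset.sum_congr rfl fun j _ => ?_
      simp only [Pi.star_apply, star_mul', starRingEnd_apply, star_star]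
      ring
    rw [key, ha, hb]
  rw [Matrix.posSemidef_iff_dotProduct_mulVec]
  constructor
  · -- Hermitian
    unfold Matrix.IsHermitian
    ext p q
    simp [Matrix.conjTranspose_apply, Matrix.sub_apply, Matrix.smul_apply, Matrix.one_apply,
      PT, outer, apply_ite (starRingEnd ℂ), eq_comm, mul_comm]
  intro x
  set g : Fin 2 → Fin 2 → ℂ := fun s t => star (f s t) ⬝ᵥ x with hg
  -- expansion of the quadratic form of `PT (outer φ)`
  have hgs : ∀ s t : Fin 2, g s t = ∑ q, star (f s t q) * x q := by
    intro s t; rw [hg]; rfl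
  have hgc : ∀ s t : Fin 2, star (g s t) = ∑ p, star (x p) * f s t p := by
    intro s t
    rw [hgs s t, star_sum]
    refine Finset.sum_congr rfl fun p _ => ?_
    rw [star_mul', star_star]; ring
  have hquad : star x ⬝ᵥ (PT (outer φ) *ᵥ x)
      = (μ₀:ℂ)^2 * (star (g 0 0) * g 0 0)
        + (μ₀:ℂ)*(μ₁:ℂ) * (star (g 0 1) * g 1 0)
        + (μ₀:ℂ)*(μ₁:ℂ) * (star (g 1 0) * g 0 1)
        + (μ₁:ℂ)^2 * (star (g 1 1) * g 1 1) := by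
    have hL : star x ⬝ᵥ (PT (outer φ) *ᵥ x)
        = ∑ p, ∑ q, star (x p) * (PT (outer φ) p q * x q) := by
      simp [dotProduct, mulVec, Finset.mul_sum]
    rw [hL, hgc 0 0, hgc 0 1, hgc 1 0, hgc 1 1, hgs 0 0, hgs 1 0, hgs 0 1, hgs 1 1]
    conv_lhs => rw [Finset.sum_comm]
    simp only [Finset.sum_mul, Finset.mul_sum, ← Finset.sum_add_distrib]
    refine Finset.sum_congr rfl fun p _ => Finset.sum_congr rfl fun q _ => ?_
    simp only [PT, outer, Matrix.of_apply, hφ, hf, ← starRingEnd_apply, _root_.map_add,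
      _root_.map_mul, Complex.conj_ofReal, Complex.conj_conj]
    ring
  -- Bessel inequality
  have hS : star (g 0 0) * g 0 0 + star (g 0 1) * g 0 1 + star (g 1 0) * g 1 0
      + star (g 1 1) * g 1 1 ≤ star x ⬝ᵥ x := by
    set y : ZMod d × ZMod d → ℂ :=
      x - g 0 0 • f 0 0 - g 0 1 • f 0 1 - g 1 0 • f 1 0 - g 1 1 • f 1 1 with hy
    have hyy : (0:ℂ) ≤ star y ⬝ᵥ y := by
      rw [dotProduct]
      refine Finset.sum_nonneg fun i _ => ?_
      exact star_mul_self_nonneg _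
    have hxf : ∀ s t : Fin 2, star x ⬝ᵥ f s t = star (g s t) := by
      intro s t; rw [hg, star_dotProduct]
    have hfx : ∀ s t : Fin 2, star (f s t) ⬝ᵥ x = g s t := by
      intro s t; rw [hg]
    have hbes : star y ⬝ᵥ y = star x ⬝ᵥ x
        - (star (g 0 0) * g 0 0 + star (g 0 1) * g 0 1 + star (g 1 0) * g 1 0
          + star (g 1 1) * g 1 1) := by
      simp only [hy, star_sub, star_smul, sub_dotProduct, dotProduct_sub,
        smul_dotProduct, dotProduct_smul, hxf, hfx, hfon, smul_eq_mul]
      simp only [Fin.isValue, one_ne_zero, zero_ne_one, if_true, if_false, reduceIte,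
        mul_one, mul_zero, zero_mul]
      ring
    rw [hbes] at hyy
    exact sub_nonneg.mp hyy
  -- reduce the goal to the quadratic form
  have hred : star x ⬝ᵥ ((((μ₀ ^ 2 : ℝ) : ℂ) • (1 : Matrix (ZMod d × ZMod d)
        (ZMod d × ZMod d) ℂ) - PT (outer φ)) *ᵥ x)
      = ((μ₀^2 : ℝ) : ℂ) * (star x ⬝ᵥ x) - star x ⬝ᵥ (PT (outer φ) *ᵥ x) := by
    rw [Matrix.sub_mulVec, dotProduct_sub, Matrix.smul_mulVec,
      Matrix.one_mulVec, dotProduct_smul, smul_eq_mul]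
  rw [hred, hquad]
  -- final real-arithmetic verification
  set S : ℂ := star x ⬝ᵥ x with hSdef
  clear_value S
  have hcm : ∀ z : ℂ, star z * z = ((‖z‖ ^ 2 : ℝ) : ℂ) := by
    intro z
    rw [show (star z) = (starRingEnd ℂ) z from rfl, mul_comm, Complex.mul_conj, Complex.sq_norm]
  have hconj : star (g 1 0) * g 0 1 = (starRingEnd ℂ) (star (g 0 1) * g 1 0) := by
    simp only [starRingEnd_apply, star_mul', star_star]; ring
  simp only [hcm] at hS ⊢
  rw [Complex.le_def] at hS
  rw [hconj, Complex.le_def]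
  set z := star (g 0 1) * g 1 0 with hz
  have hzre : z.re ≤ ‖g 0 1‖ * ‖g 1 0‖ := by
    have h1 : ‖z‖ = ‖g 0 1‖ * ‖g 1 0‖ := by
      rw [hz, norm_mul]
      congr 1
      exact Complex.norm_conj _
    exact h1 ▸ Complex.re_le_norm z
  obtain ⟨h1, h2⟩ := hS
  simp only [Complex.sub_re, Complex.sub_im, Complex.add_re, Complex.add_im,
    Complex.mul_re, Complex.mul_im, Complex.ofReal_re, Complex.ofReal_im,
    Complex.conj_re, Complex.conj_im, ← Complex.ofReal_pow, Complex.zero_re,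
    Complex.zero_im] at h1 h2 ⊢
  have h2' : S.im = 0 := by linarith
  rw [h2']
  constructor
  · set n01 := ‖g 0 1‖
    set n10 := ‖g 1 0‖
    have hμ0 : (0:ℝ) < μ₀ := lt_of_lt_of_le hμ1 hμ
    have h4 : μ₀*μ₁*z.re ≤ μ₀*μ₁*(n01*n10) :=
      mul_le_mul_of_nonneg_left hzre (le_of_lt (mul_pos hμ0 hμ1))
    have h5 : 0 ≤ μ₀*μ₁*(n01-n10)^2 :=
      mul_nonneg (mul_nonneg hμ0.le hμ1.le) (sq_nonneg _)
    have h6 : 0 ≤ (μ₀*μ₀ - μ₀*μ₁)*(n01^2+n10^2) := by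
      apply mul_nonneg
      · nlinarith
      · positivity
    have h7 : 0 ≤ (μ₀^2 - μ₁^2)*(‖g 1 1‖)^2 := by
      apply mul_nonneg
      · nlinarith
      · positivity
    have hB := mul_le_mul_of_nonneg_left h1 (sq_nonneg μ₀)
    nlinarith [h4, h5, h6, h7, hB]
  · linarith
end
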